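/- Let H be a complex Hilbert space and let A, B, X be bounded linear operators on H. If A and B are normal operators (i.e. A*A = AA* and B*B = BB*) and AX = XB, then A*X = XB*. -/

import Mathlib

open ContinuousLinearMap

open NormedSpace in
private lemma exp_intertwine {H : Type*} [NormedAddCommGroup H] [InnerProductSpace ℂ H]
    [CompleteSpace H] {A B : H →L[ℂ] H} (X : H →L[ℂ] H)
    (h : A * X = X * B) (z : ℂ) :
    exp (z • A) * X = X * exp (z • B) := by
  have hpow : ∀ n : ℕ, A ^ n * X = X * B ^ n := by
    intro n
    induction n with
    | zero => simp
    | succ n ih => rw [pow_succ, pow_succ, mul_assoc, h, ← mul_assoc, ih, mul_assoc]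
  simp only [exp_eq_tsum ℂ]
  rw [← (expSeries_summable' (𝕂 := ℂ) (z • A)).tsum_mul_right X,
    ← (expSeries_summable' (𝕂 := ℂ) (z • B)).tsum_mul_left X]
  congr 1
  funext n
  rw [smul_mul_assoc, mul_smul_comm, smul_pow, smul_pow, smul_mul_assoc, mul_smul_comm,
    hpow n]

set_option maxHeartbeats 1000000 in
/-- **Fuglede–Putnam theorem.** If `A` and `B` are normal bounded operators on a complex
Hilbert space `H` and `AX = XB`, then `A*X = XB*`. -/
theorem fuglede_putnam_normal {H : Type*} [NormedAddCommGroup H] [InnerProductSpace ℂ H]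
    [CompleteSpace H] (A B X : H →L[ℂ] H)
    (hA : adjoint A * A = A * adjoint A) (hB : adjoint B * B = B * adjoint B)
    (h : A * X = X * B) : adjoint A * X = X * adjoint B := by
  classical
  let +nondep : NormedAlgebra ℚ (H →L[ℂ] H) := .restrictScalars ℚ ℂ (H →L[ℂ] H)
  open NormedSpace in
  -- the entire function
  set f : ℂ → (H →L[ℂ] H) := fun z => exp (z • adjoint A) * (X * exp (z • (-adjoint B)))
    with hf
  -- f is differentiable
  have hdiffexp : ∀ T : H →L[ℂ] H, Differentiable ℂ (fun z : ℂ => exp (z • T)) := by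
    intro T z
    exact (hasDerivAt_exp_smul_const T z).differentiableAt
  have hdiff : Differentiable ℂ f :=
    (hdiffexp (adjoint A)).mul ((differentiable_const X).mul (hdiffexp (-adjoint B)))
  -- f is bounded
  have hbound : ∀ z : ℂ, ‖f z‖ ≤ ‖X‖ := by
    intro z
    set w : ℂ := -(starRingEnd ℂ z) with hw
    have hinv : ∀ (T : H →L[ℂ] H) (u : ℂ), exp (u • T) * exp ((-u) • T) = 1 := by
      intro T u
      rw [← exp_add_of_commute (Commute.smul_left (Commute.smul_right (Commute.refl T) _) _)]
      simp
    -- X = exp (w • A) * X * exp ((-w) • B)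
    have hX : X = exp (w • A) * (X * exp ((-w) • B)) := by
      rw [← mul_assoc, exp_intertwine X h w, mul_assoc, hinv, mul_one]
    have hA' : Commute (adjoint A) A := hA
    have hcommA : Commute (z • adjoint A) (w • A) := (hA'.smul_left z).smul_right w
    have hcommB : Commute ((-w) • B) (z • (-adjoint B)) := by
      have h1 : Commute B (adjoint B) := hB.symm
      exact (h1.neg_right.smul_left (-w)).smul_right z
    have hfz : f z = exp (z • adjoint A + w • A) * (X * exp ((-w) • B + z • (-adjoint B))) := by
      rw [exp_add_of_commute hcommA, exp_add_of_commute hcommB]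
      show exp (z • adjoint A) * (X * exp (z • (-adjoint B))) = _
      conv_lhs => rw [hX]
      simp only [mul_assoc]
    -- both exponents are skew-adjoint, so the exponentials are unitary
    have hS : exp (z • adjoint A + w • A) ∈ unitary (H →L[ℂ] H) := by
      apply exp_mem_unitary_of_mem_skewAdjoint
      rw [skewAdjoint.mem_iff]
      simp only [star_add, star_smul, star_neg, ContinuousLinearMap.star_eq_adjoint,
        adjoint_adjoint, hw, Complex.star_def, map_neg, Complex.conj_conj, neg_smul, smul_neg,
        neg_add, neg_neg]
      abel
    have hT : exp ((-w) • B + z • (-adjoint B)) ∈ unitary (H →L[ℂ] H) := by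
      apply exp_mem_unitary_of_mem_skewAdjoint
      rw [skewAdjoint.mem_iff]
      simp only [star_add, star_smul, star_neg, ContinuousLinearMap.star_eq_adjoint,
        adjoint_adjoint, hw, Complex.star_def, map_neg, Complex.conj_conj, neg_smul, smul_neg,
        neg_add, neg_neg]
      abel
    rw [hfz, CStarRing.norm_mem_unitary_mul _ hS, CStarRing.norm_mul_mem_unitary X hT]
  -- Liouville: f is constant
  have hrange : Bornology.IsBounded (Set.range f) := by
    apply Metric.isBounded_closedBall (x := (0 : H →L[ℂ] H)) (r := ‖X‖) |>.subset
    rintro _ ⟨z, rfl⟩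
    simpa using hbound z
  have hconst : ∀ z, f z = f 0 := fun z => hdiff.apply_eq_apply_of_bounded hrange z 0
  have hf0 : f 0 = X := by simp [hf]
  -- hence exp (z • A*) * X = X * exp (z • B*)
  have key : ∀ z : ℂ, exp (z • adjoint A) * X = X * exp (z • adjoint B) := by
    intro z
    have h1 : f z = X := (hconst z).trans hf0
    have hc : Commute (z • (-adjoint B)) (z • adjoint B) :=
      (((Commute.refl (adjoint B)).neg_left).smul_left z).smul_right z
    have hinv : exp (z • (-adjoint B)) * exp (z • adjoint B) = 1 := by
      rw [← exp_add_of_commute hc]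
      simp
    calc exp (z • adjoint A) * X
        = f z * exp (z • adjoint B) := by
          show _ = exp (z • adjoint A) * (X * exp (z • (-adjoint B))) * exp (z • adjoint B)
          rw [mul_assoc, mul_assoc, hinv, mul_one]
      _ = X * exp (z • adjoint B) := by rw [h1]
  -- differentiate at 0
  have hd1 : HasDerivAt (fun z : ℂ => exp (z • adjoint A) * X) (adjoint A * X) 0 := by
    have := ((hasDerivAt_exp_smul_const' (𝕂 := ℂ) (adjoint A) 0).mul_const X)
    simpa using this
  have hd2 : HasDerivAt (fun z : ℂ => exp (z • adjoint A) * X) (X * adjoint B) 0 := by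
    have := HasDerivAt.const_mul X (hasDerivAt_exp_smul_const' (𝕂 := ℂ) (adjoint B) 0)
    simp only [zero_smul, exp_zero, mul_one] at this
    have heq : (fun z : ℂ => X * exp (z • adjoint B)) =
        fun z : ℂ => exp (z • adjoint A) * X := by
      funext z; rw [key z]
    rwa [heq] at this
  exact hd1.unique hd2
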